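/- Consider the adaptive gradient flow for the exponential-loss empirical risk with the separability assumption. Then the empirical risk decreases to zero along the flow, lim_{t→∞} L̃(v(t)) = 0, and consequently the parameter norm diverges, lim_{t→∞} ‖v(t)‖ = ∞. -/

import Mathlib

open MeasureTheory Filter

lemma euler_identity {E : Type*} [NormedAddCommGroup E] [NormedSpace ℝ E]
    (f : E → ℝ) (hf : Differentiable ℝ f) {L : ℝ}
    (hhom : ∀ α : ℝ, 0 < α → ∀ v, f (α • v) = α ^ L * f v) (x : E) :
    fderiv ℝ f x x = L * f x := by
  have hs : HasDerivAt (fun α : ℝ => α • x) x 1 := by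
    simpa using (hasDerivAt_id (1:ℝ)).smul_const x
  have h1 : HasDerivAt (fun α : ℝ => f (α • x)) (fderiv ℝ f x x) 1 := by
    have := (hf ((1:ℝ) • x)).hasFDerivAt.comp_hasDerivAt 1 hs
    rw [one_smul] at this
    exact this
  have h2 : HasDerivAt (fun α : ℝ => α ^ L * f x) (L * f x) 1 := by
    have := (Real.hasDerivAt_rpow_const (x := (1:ℝ)) (p := L) (Or.inl one_ne_zero)).mul_const (f x)
    simpa using this
  have heq : (fun α : ℝ => f (α • x)) =ᶠ[nhds (1:ℝ)] (fun α : ℝ => α ^ L * f x) := by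
    filter_upwards [eventually_gt_nhds one_pos] with a ha
    exact hhom a ha x
  exact h1.unique (h2.congr_of_eventuallyEq heq)

lemma clm_expand {p : ℕ} (T : EuclideanSpace ℝ (Fin p) →L[ℝ] ℝ) (y : EuclideanSpace ℝ (Fin p)) :
    T y = ∑ j, y j * T (EuclideanSpace.single j 1) := by
  have hy : y = ∑ j, y j • EuclideanSpace.single j (1:ℝ) := by
    ext k
    have : (∑ x : Fin p, y x • EuclideanSpace.single x (1:ℝ)) k
        = ∑ x : Fin p, (y x • EuclideanSpace.single x (1:ℝ)) k :=
      map_sum (EuclideanSpace.proj (𝕜 := ℝ) k)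
        (fun x => y x • EuclideanSpace.single x (1:ℝ)) Finset.univ
    rw [this]
    simp [EuclideanSpace.single_apply, Finset.sum_ite_eq']
  conv_lhs => rw [hy]
  rw [map_sum]
  simp [smul_eq_mul]

lemma hasDerivWithinAt_euclidean {p : ℕ} {f : ℝ → EuclideanSpace ℝ (Fin p)}
    {f' : EuclideanSpace ℝ (Fin p)} {s : Set ℝ} {x : ℝ}
    (h : ∀ j, HasDerivWithinAt (fun t => f t j) (f' j) s x) : HasDerivWithinAt f f' s x :=
  ((PiLp.continuousLinearEquiv 2 ℝ (fun _ : Fin p => ℝ)).symm.toContinuousLinearMap.hasFDerivAt).comp_hasDerivWithinAt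
    x (hasDerivWithinAt_pi.2 h)

lemma antitoneOn_Ici_of_hasDerivWithinAt {a : ℝ} {f f' : ℝ → ℝ}
    (hf : ∀ t ∈ Set.Ici a, HasDerivWithinAt f (f' t) (Set.Ici a) t)
    (h0 : ∀ t ∈ Set.Ici a, f' t ≤ 0) : AntitoneOn f (Set.Ici a) := by
  apply antitoneOn_of_deriv_nonpos (convex_Ici a)
  · exact fun t ht => (hf t ht).continuousWithinAt
  · intro t ht
    rw [interior_Ici] at ht
    exact ((hf t (Set.mem_Ici.2 (Set.mem_Ioi.1 ht).le)).hasDerivAt (Ici_mem_nhds ht)).differentiableAt.differentiableWithinAt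
  · intro t ht
    rw [interior_Ici] at ht
    rw [((hf t (Set.mem_Ici.2 (Set.mem_Ioi.1 ht).le)).hasDerivAt (Ici_mem_nhds ht)).deriv]
    exact h0 t (Set.mem_Ici.2 (Set.mem_Ioi.1 ht).le)

set_option maxHeartbeats 2000000 in
/-- Along an adaptive gradient flow for the exponential-loss empirical risk of
`L`-homogeneous `C¹` functions with the separability assumption, the empirical risk
tends to zero and the parameter norm diverges to infinity. -/
theorem adaptive_flow_loss_to_zero (p N : ℕ) (hp : 1 ≤ p) (hN : 1 ≤ N)
    (L : ℝ) (hL : 0 < L)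
    (q : Fin N → EuclideanSpace ℝ (Fin p) → ℝ)
    (hq : ∀ i, ContDiff ℝ 1 (q i))
    (hhom : ∀ i, ∀ α : ℝ, 0 < α → ∀ v, q i (α • v) = α ^ L * q i v)
    (Ltil : EuclideanSpace ℝ (Fin p) → ℝ)
    (hLtil : ∀ x, Ltil x = ∑ i, Real.exp (-(q i x)))
    (v : ℝ → EuclideanSpace ℝ (Fin p))
    (β β' : ℝ → Fin p → ℝ)
    (hβpos : ∀ t ∈ Set.Ici (0:ℝ), ∀ j, 0 < β t j)
    (hβderiv : ∀ j, ∀ t ∈ Set.Ici (0:ℝ),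
      HasDerivWithinAt (fun s => β s j) (β' t j) (Set.Ici 0) t)
    (hβ'cont : ∀ j, ContinuousOn (fun t => β' t j) (Set.Ici 0))
    (hβlim : ∀ j, Tendsto (fun t => β t j) atTop (nhds 1))
    (hβint : ∀ j, IntegrableOn (fun t => |β' t j / β t j|) (Set.Ici 0))
    (hflow : ∀ j, ∀ t ∈ Set.Ici (0:ℝ),
      HasDerivWithinAt (fun s => v s j)
        (-(β t j) * fderiv ℝ Ltil (v t) (EuclideanSpace.single j 1)) (Set.Ici 0) t)
    (t₀ : ℝ) (ht₀ : 0 ≤ t₀) (hsep : Ltil (v t₀) < 1) :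
    Tendsto (fun t => Ltil (v t)) atTop (nhds 0) ∧
      Tendsto (fun t => ‖v t‖) atTop atTop := by
  have hLfun : Ltil = fun x => ∑ i, Real.exp (-(q i x)) := funext hLtil
  subst hLfun
  have hpe : 0 < p := hp
  have hNi : Nonempty (Fin N) := ⟨⟨0, hN⟩⟩
  have hpi : Nonempty (Fin p) := ⟨⟨0, hpe⟩⟩
  set Lt : EuclideanSpace ℝ (Fin p) → ℝ := fun x => ∑ i, Real.exp (-(q i x)) with hLt
  have hqd : ∀ i, Differentiable ℝ (q i) := fun i => (hq i).differentiable one_ne_zero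
  have hLd : Differentiable ℝ Lt := by
    apply Differentiable.fun_sum
    intro i _
    exact (Real.differentiable_exp.comp (hqd i).neg)
  have hLpos : ∀ x, 0 < Lt x := fun x =>
    Finset.sum_pos (fun i _ => Real.exp_pos _) Finset.univ_nonempty
  have hterm : ∀ x (i : Fin N), Real.exp (-(q i x)) ≤ Lt x := fun x i =>
    Finset.single_le_sum (f := fun i' => Real.exp (-(q i' x)))
      (fun i' _ => (Real.exp_pos _).le) (Finset.mem_univ i)
  -- derivative of Lt
  have hfd : ∀ x, HasFDerivAt Lt (∑ i, (-(Real.exp (-(q i x)))) • fderiv ℝ (q i) x) x := by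
    intro x
    apply HasFDerivAt.fun_sum
    intro i _
    have := ((hqd i x).hasFDerivAt.neg).exp
    simpa [neg_smul, smul_neg] using this
  have hq0 : ∀ i, q i 0 = 0 := by
    intro i
    have h := hhom i 2 two_pos 0
    rw [smul_zero] at h
    have h2 : (1:ℝ) < (2:ℝ) ^ L := (Real.one_lt_rpow_iff_of_pos two_pos).2 (Or.inl ⟨one_lt_two, hL⟩)
    nlinarith
  -- Euler identity for Lt
  have hDxx : ∀ x, fderiv ℝ Lt x x = -(L * ∑ i, Real.exp (-(q i x)) * q i x) := by
    intro x
    rw [(hfd x).fderiv]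
    rw [ContinuousLinearMap.sum_apply]
    have : ∀ i : Fin N, ((-(Real.exp (-(q i x)))) • fderiv ℝ (q i) x) x
        = -(Real.exp (-(q i x)) * (L * q i x)) := by
      intro i
      rw [ContinuousLinearMap.smul_apply, euler_identity (q i) (hqd i) (hhom i) x]
      simp [smul_eq_mul]
    rw [Finset.sum_congr rfl (fun i _ => this i), Finset.sum_neg_distrib, Finset.mul_sum,
      Finset.sum_congr rfl (fun (i : Fin N) _ => by ring :
        ∀ i ∈ Finset.univ, Real.exp (-(q i x)) * (L * q i x) = L * (Real.exp (-(q i x)) * q i x))]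
  
  -- coordinate gradient and flow derivative
  set A : ℝ → Fin p → ℝ := fun t j => fderiv ℝ Lt (v t) (EuclideanSpace.single j 1) with hAdef
  set F : ℝ → ℝ := fun t => Lt (v t) with hFdef
  have hvderiv : ∀ t ∈ Set.Ici (0:ℝ), HasDerivWithinAt v
      ((WithLp.equiv 2 (Fin p → ℝ)).symm (fun j => -(β t j) * A t j)) (Set.Ici 0) t := by
    intro t ht
    apply hasDerivWithinAt_euclidean
    intro j
    exact hflow j t ht
  have hFderiv : ∀ t ∈ Set.Ici (0:ℝ),
      HasDerivWithinAt F (-(∑ j, β t j * (A t j)^2)) (Set.Ici 0) t := by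
    intro t ht
    have h1 := ((hLd (v t)).hasFDerivAt).comp_hasDerivWithinAt t (hvderiv t ht)
    refine h1.congr_deriv ?_
    symm
    rw [clm_expand, ← Finset.sum_neg_distrib]
    apply Finset.sum_congr rfl
    intro j _
    show -(β t j * (A t j)^2) = -(β t j) * A t j * A t j
    ring
  -- derivative of squared norm
  set S : ℝ → ℝ := fun t => ∑ j, (v t j)^2 with hSdef
  have hSderiv : ∀ t ∈ Set.Ici (0:ℝ),
      HasDerivWithinAt S (∑ j, 2 * v t j * (-(β t j) * A t j)) (Set.Ici 0) t := by
    intro t ht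
    apply HasDerivWithinAt.fun_sum
    intro j _
    have h2 := (hflow j t ht).pow 2
    refine h2.congr_deriv ?_
    push_cast
    ring
  -- uniform bounds on β
  have hβcont : ∀ j, ContinuousOn (fun t => β t j) (Set.Ici 0) :=
    fun j t ht => (hβderiv j t ht).continuousWithinAt
  have key : ∀ j : Fin p, ∃ bj Bj : ℝ, 0 < bj ∧
      ∀ t ∈ Set.Ici (0:ℝ), bj ≤ β t j ∧ β t j ≤ Bj := by
    intro j
    have h1 : ∀ᶠ t in atTop, β t j ∈ Set.Icc (1/2:ℝ) 2 :=
      (hβlim j) (Icc_mem_nhds (by norm_num) (by norm_num))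
    obtain ⟨T, hT⟩ := eventually_atTop.1 h1
    have hT'0 : (0:ℝ) ≤ max T 0 := le_max_right T 0
    obtain ⟨a1, ha1, hmin⟩ := isCompact_Icc.exists_isMinOn (Set.nonempty_Icc.2 hT'0)
      ((hβcont j).mono (fun x hx => hx.1))
    obtain ⟨a2, ha2, hmax⟩ := isCompact_Icc.exists_isMaxOn (Set.nonempty_Icc.2 hT'0)
      ((hβcont j).mono (fun x hx => hx.1))
    refine ⟨min (β a1 j) (1/2), max (β a2 j) 2,
      lt_min (hβpos a1 ha1.1 j) (by norm_num), ?_⟩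
    intro t ht
    by_cases htT : t ≤ max T 0
    · exact ⟨le_trans (min_le_left _ _) (isMinOn_iff.1 hmin t ⟨ht, htT⟩),
        le_trans (isMaxOn_iff.1 hmax t ⟨ht, htT⟩) (le_max_left _ _)⟩
    · have h2 := hT t (le_trans (le_max_left T 0) (not_le.1 htT).le)
      exact ⟨le_trans (min_le_right _ _) h2.1, le_trans h2.2 (le_max_right _ _)⟩
  choose bf Bf hbf hbd using key
  have hune : (Finset.univ : Finset (Fin p)).Nonempty := Finset.univ_nonempty
  set b : ℝ := Finset.univ.inf' hune bf with hbdef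
  set B : ℝ := Finset.univ.sup' hune Bf with hBdef
  have hb : 0 < b := (Finset.lt_inf'_iff hune).2 fun j _ => hbf j
  have hble : ∀ t, (0:ℝ) ≤ t → ∀ j, b ≤ β t j := fun t ht j =>
    le_trans (Finset.inf'_le bf (Finset.mem_univ j)) (hbd j t (Set.mem_Ici.2 ht)).1
  have hBge : ∀ t, (0:ℝ) ≤ t → ∀ j, β t j ≤ B := fun t ht j =>
    le_trans (hbd j t (Set.mem_Ici.2 ht)).2 (Finset.le_sup' Bf (Finset.mem_univ j))
  have hβpos' : ∀ t, (0:ℝ) ≤ t → ∀ j, 0 < β t j :=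
    fun t ht j => hβpos t (Set.mem_Ici.2 ht) j
  have hB : 0 < B := lt_of_lt_of_le (hβpos' 0 le_rfl hpi.some) (hBge 0 le_rfl hpi.some)
  -- F is antitone
  have hFanti : AntitoneOn F (Set.Ici 0) := by
    apply antitoneOn_Ici_of_hasDerivWithinAt hFderiv
    intro t ht
    have : (0:ℝ) ≤ ∑ j, β t j * (A t j)^2 :=
      Finset.sum_nonneg fun j _ => mul_nonneg (hβpos t ht j).le (sq_nonneg _)
    linarith
  have hFle : ∀ t, t₀ ≤ t → F t ≤ F t₀ := fun t ht =>
    hFanti (Set.mem_Ici.2 ht₀) (Set.mem_Ici.2 (le_trans ht₀ ht)) ht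
  have hSpos : ∀ t, t₀ ≤ t → 0 < S t := by
    intro t ht
    rcases (Finset.sum_nonneg fun j (_ : j ∈ Finset.univ) =>
      sq_nonneg (v t j)).lt_or_eq with h | h
    · exact h
    · exfalso
      have hvz : v t = 0 := by
        ext j
        have := (Finset.sum_eq_zero_iff_of_nonneg
          (fun j (_ : j ∈ Finset.univ) => sq_nonneg (v t j))).1 h.symm j (Finset.mem_univ j)
        have := sq_eq_zero_iff.1 this
        simpa using this
      have hFN : F t = N := by
        show Lt (v t) = N
        rw [hvz]
        simp [hLt, hq0]
      have h1 : (1:ℝ) ≤ N := by exact_mod_cast hN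
      have h2 := hFle t ht
      rw [hFN] at h2
      linarith
  -- main claim: F gets below any ε
  have keyε : ∀ ε : ℝ, 0 < ε → ∃ T, t₀ ≤ T ∧ F T < ε := by
    intro ε hε
    by_contra hcon
    push_neg at hcon
    have hA0pos : 0 < F t₀ := hLpos (v t₀)
    have hlogA0 : Real.log (F t₀) < 0 := Real.log_neg hA0pos hsep
    set m : ℝ := ε * (-Real.log (F t₀)) with hmdef
    have hm : 0 < m := mul_pos hε (neg_pos.2 hlogA0)
    set c : ℝ := L * m with hcdef
    have hc : 0 < c := mul_pos hL hm
    have hvA : ∀ t, t₀ ≤ t → ∑ j, v t j * A t j ≤ -c := by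
      intro t ht
      have h1 : ∑ j, v t j * A t j = fderiv ℝ Lt (v t) (v t) := (clm_expand _ _).symm
      rw [h1, hDxx]
      have hqlb : ∀ i : Fin N, -Real.log (F t₀) ≤ q i (v t) := by
        intro i
        have h2 : Real.exp (-(q i (v t))) ≤ F t₀ := le_trans (hterm _ i) (hFle t ht)
        have h3 := Real.log_le_log (Real.exp_pos _) h2
        rw [Real.log_exp] at h3
        linarith
      have h4 : (-Real.log (F t₀)) * F t ≤ ∑ i, Real.exp (-(q i (v t))) * q i (v t) := by
        have h5 : (-Real.log (F t₀)) * F t = ∑ i, Real.exp (-(q i (v t))) * (-Real.log (F t₀)) := by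
          show (-Real.log (F t₀)) * Lt (v t) = _
          rw [hLt]
          rw [Finset.mul_sum]
          exact Finset.sum_congr rfl fun i _ => mul_comm _ _
        rw [h5]
        exact Finset.sum_le_sum fun i _ =>
          mul_le_mul_of_nonneg_left (hqlb i) (Real.exp_pos _).le
      have h6 : m ≤ ∑ i, Real.exp (-(q i (v t))) * q i (v t) := by
        have h7 := hcon t ht
        nlinarith [neg_pos.2 hlogA0]
      rw [hcdef]
      nlinarith
    have hCS1 : ∀ t, t₀ ≤ t → c^2 ≤ S t * ∑ j, (A t j)^2 := by
      intro t ht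
      have h1 := Finset.sum_mul_sq_le_sq_mul_sq Finset.univ (fun j => v t j) (fun j => A t j)
      have h2 := hvA t ht
      show c^2 ≤ (∑ j, (v t j)^2) * ∑ j, (A t j)^2
      nlinarith
    have hCS2 : ∀ t, t₀ ≤ t → ∑ j, 2 * v t j * (-(β t j) * A t j)
        ≤ 2 * B * (Real.sqrt (S t) * Real.sqrt (∑ j, (A t j)^2)) := by
      intro t ht
      have h0t : (0:ℝ) ≤ t := le_trans ht₀ ht
      have hSnn : (0:ℝ) ≤ S t := (hSpos t ht).le
      have hsqAnn : (0:ℝ) ≤ ∑ j, (A t j)^2 := Finset.sum_nonneg fun j _ => sq_nonneg _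
      have h1 : ∑ j, 2 * v t j * (-(β t j) * A t j)
          = 2 * ∑ j, v t j * (-(β t j) * A t j) := by
        rw [Finset.mul_sum]
        exact Finset.sum_congr rfl fun j _ => by ring
      have h2 : (∑ j, v t j * (-(β t j) * A t j))^2
          ≤ (∑ j, (v t j)^2) * ∑ j, (-(β t j) * A t j)^2 :=
        Finset.sum_mul_sq_le_sq_mul_sq Finset.univ
          (fun j => v t j) (fun j => -(β t j) * A t j)
      have h3 : ∑ j, v t j * (-(β t j) * A t j)
          ≤ Real.sqrt (S t) * Real.sqrt (∑ j, (-(β t j) * A t j)^2) := by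
        have h4 := le_abs_self (∑ j, v t j * (-(β t j) * A t j))
        have h5 : |∑ j, v t j * (-(β t j) * A t j)|
            = Real.sqrt ((∑ j, v t j * (-(β t j) * A t j))^2) :=
          (Real.sqrt_sq_eq_abs _).symm
        have h6 : Real.sqrt ((∑ j, v t j * (-(β t j) * A t j))^2)
            ≤ Real.sqrt ((∑ j, (v t j)^2) * ∑ j, (-(β t j) * A t j)^2) :=
          Real.sqrt_le_sqrt h2
        rw [Real.sqrt_mul (Finset.sum_nonneg fun j _ => sq_nonneg (v t j))] at h6
        show ∑ j, v t j * (-(β t j) * A t j)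
          ≤ Real.sqrt (∑ j, (v t j)^2) * Real.sqrt (∑ j, (-(β t j) * A t j)^2)
        linarith
      have h7 : Real.sqrt (∑ j, (-(β t j) * A t j)^2)
          ≤ B * Real.sqrt (∑ j, (A t j)^2) := by
        have h8 : ∑ j, (-(β t j) * A t j)^2 ≤ B^2 * ∑ j, (A t j)^2 := by
          rw [Finset.mul_sum]
          apply Finset.sum_le_sum
          intro j _
          have hj1 := hβpos' t h0t j
          have hj2 := hBge t h0t j
          nlinarith [mul_nonneg (sq_nonneg (A t j))
            (mul_nonneg (sub_nonneg.2 hj2) (by linarith : (0:ℝ) ≤ B + β t j))]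
        calc Real.sqrt (∑ j, (-(β t j) * A t j)^2)
            ≤ Real.sqrt (B^2 * ∑ j, (A t j)^2) := Real.sqrt_le_sqrt h8
          _ = B * Real.sqrt (∑ j, (A t j)^2) := by
              rw [Real.sqrt_mul (sq_nonneg B), Real.sqrt_sq hB.le]
      have hXnn := Real.sqrt_nonneg (∑ j, (v t j)^2)
      have hYnn := Real.sqrt_nonneg (∑ j, (A t j)^2)
      have hSeq : Real.sqrt (S t) = Real.sqrt (∑ j, (v t j)^2) := rfl
      rw [h1, hSeq]
      nlinarith [mul_le_mul_of_nonneg_left h7 (mul_nonneg (by norm_num : (0:ℝ) ≤ 2) hXnn)]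
    set K : ℝ := b * c / (2 * B) with hKdef
    have hK : 0 < K := div_pos (mul_pos hb hc) (by linarith)
    set G : ℝ → ℝ := fun t => F t + K * Real.log (S t) with hGdef
    have hGanti : AntitoneOn G (Set.Ici t₀) := by
      apply antitoneOn_Ici_of_hasDerivWithinAt
        (f' := fun t => -(∑ j, β t j * (A t j)^2)
          + K * ((∑ j, 2 * v t j * (-(β t j) * A t j)) / S t))
      · intro t ht
        have h0t : (0:ℝ) ≤ t := le_trans ht₀ ht
        have hsub : Set.Ici t₀ ⊆ Set.Ici (0:ℝ) := Set.Ici_subset_Ici.2 ht₀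
        exact ((hFderiv t h0t).mono hsub).add
          ((((hSderiv t h0t).mono hsub).log (hSpos t ht).ne').const_mul K)
      · intro t ht
        have h0t : (0:ℝ) ≤ t := le_trans ht₀ ht
        have hst := hSpos t ht
        have hsqAnn : (0:ℝ) ≤ ∑ j, (A t j)^2 := Finset.sum_nonneg fun j _ => sq_nonneg _
        have hbsqA : b * ∑ j, (A t j)^2 ≤ ∑ j, β t j * (A t j)^2 := by
          rw [Finset.mul_sum]
          exact Finset.sum_le_sum fun j _ =>
            mul_le_mul_of_nonneg_right (hble t h0t j) (sq_nonneg _)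
        have hmain : K * ((∑ j, 2 * v t j * (-(β t j) * A t j)) / S t)
            ≤ b * ∑ j, (A t j)^2 := by
          rw [show K * ((∑ j, 2 * v t j * (-(β t j) * A t j)) / S t)
              = K * (∑ j, 2 * v t j * (-(β t j) * A t j)) / S t from
            (mul_div_assoc _ _ _).symm, div_le_iff₀ hst]
          rcases le_or_gt (∑ j, 2 * v t j * (-(β t j) * A t j)) 0 with h|h
          · have h9 : K * (∑ j, 2 * v t j * (-(β t j) * A t j)) ≤ 0 :=
              mul_nonpos_of_nonneg_of_nonpos hK.le h
            exact le_trans h9 (mul_nonneg (mul_nonneg hb.le hsqAnn) hst.le)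
          · have hs'le := hCS2 t ht
            have hXY : c ≤ Real.sqrt (S t) * Real.sqrt (∑ j, (A t j)^2) := by
              have h1 : Real.sqrt (c^2) ≤ Real.sqrt (S t * ∑ j, (A t j)^2) :=
                Real.sqrt_le_sqrt (hCS1 t ht)
              rw [Real.sqrt_sq hc.le, Real.sqrt_mul hst.le] at h1
              exact h1
            have hX2 : Real.sqrt (S t) ^ 2 = S t := Real.sq_sqrt hst.le
            have hY2 : Real.sqrt (∑ j, (A t j)^2) ^ 2 = ∑ j, (A t j)^2 :=
              Real.sq_sqrt hsqAnn
            have hXnn := Real.sqrt_nonneg (S t)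
            have hYnn := Real.sqrt_nonneg (∑ j, (A t j)^2)
            have hKs' : K * (∑ j, 2 * v t j * (-(β t j) * A t j))
                ≤ K * (2 * B * (Real.sqrt (S t) * Real.sqrt (∑ j, (A t j)^2))) :=
              mul_le_mul_of_nonneg_left hs'le hK.le
            have hKsimp : K * (2 * B * (Real.sqrt (S t) * Real.sqrt (∑ j, (A t j)^2)))
                = b * c * (Real.sqrt (S t) * Real.sqrt (∑ j, (A t j)^2)) := by
              rw [hKdef]
              field_simp
            rw [hKsimp] at hKs'
            have e1 : b * c * (Real.sqrt (S t) * Real.sqrt (∑ j, (A t j)^2))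
                ≤ b * (Real.sqrt (S t) * Real.sqrt (∑ j, (A t j)^2))
                  * (Real.sqrt (S t) * Real.sqrt (∑ j, (A t j)^2)) := by
              nlinarith [mul_nonneg (mul_nonneg hb.le (mul_nonneg hXnn hYnn))
                (sub_nonneg.2 hXY)]
            have e2 : b * ((Real.sqrt (S t) * Real.sqrt (∑ j, (A t j)^2))
                  * (Real.sqrt (S t) * Real.sqrt (∑ j, (A t j)^2)))
                = b * (S t * ∑ j, (A t j)^2) := by
              rw [show (Real.sqrt (S t) * Real.sqrt (∑ j, (A t j)^2))
                  * (Real.sqrt (S t) * Real.sqrt (∑ j, (A t j)^2))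
                  = Real.sqrt (S t)^2 * Real.sqrt (∑ j, (A t j)^2)^2 from by ring, hX2, hY2]
            linarith [e1, e2, hKs']
        linarith
    have hSR : ∀ t, t₀ ≤ t → S t ≤ Real.exp (G t₀ / K) := by
      intro t ht
      have h1 : G t ≤ G t₀ := hGanti (Set.mem_Ici.2 le_rfl) (Set.mem_Ici.2 ht) ht
      have hFpos := hLpos (v t)
      have hlog : Real.log (S t) ≤ G t₀ / K := by
        rw [le_div_iff₀ hK]
        have h2 : (0:ℝ) < F t := hFpos
        have h3 : G t = F t + K * Real.log (S t) := rfl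
        nlinarith [h1]
      calc S t = Real.exp (Real.log (S t)) := (Real.exp_log (hSpos t ht)).symm
        _ ≤ Real.exp (G t₀ / K) := Real.exp_le_exp.2 hlog
    set R2 : ℝ := Real.exp (G t₀ / K) with hR2def
    have hR2 : 0 < R2 := Real.exp_pos _
    set δ : ℝ := b * (c^2 / R2) with hδdef
    have hδ : 0 < δ := mul_pos hb (div_pos (pow_pos hc 2) hR2)
    have hFδ : ∀ t ∈ Set.Ici t₀, -(∑ j, β t j * (A t j)^2) + δ ≤ 0 := by
      intro t ht
      have ht' : t₀ ≤ t := ht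
      have h0t : (0:ℝ) ≤ t := le_trans ht₀ ht'
      have hst := hSpos t ht'
      have hsqA1 : c^2 / R2 ≤ c^2 / S t :=
        div_le_div_of_nonneg_left (by positivity) hst (hSR t ht')
      have hsqA2 : c^2 / S t ≤ ∑ j, (A t j)^2 := by
        rw [div_le_iff₀ hst]
        nlinarith [hCS1 t ht']
      have hbsqA : b * ∑ j, (A t j)^2 ≤ ∑ j, β t j * (A t j)^2 := by
        rw [Finset.mul_sum]
        exact Finset.sum_le_sum fun j _ =>
          mul_le_mul_of_nonneg_right (hble t h0t j) (sq_nonneg _)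
      have : δ ≤ b * ∑ j, (A t j)^2 := by
        rw [hδdef]
        have := le_trans hsqA1 hsqA2
        nlinarith
      linarith
    have hH : AntitoneOn (fun t => F t + δ * t) (Set.Ici t₀) := by
      apply antitoneOn_Ici_of_hasDerivWithinAt
        (f' := fun t => -(∑ j, β t j * (A t j)^2) + δ)
      · intro t ht
        have h0t : (0:ℝ) ≤ t := le_trans ht₀ ht
        have hsub : Set.Ici t₀ ⊆ Set.Ici (0:ℝ) := Set.Ici_subset_Ici.2 ht₀
        refine ((hFderiv t h0t).mono hsub).add ?_
        simpa using ((hasDerivWithinAt_id t (Set.Ici t₀)).const_mul δ)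
      · exact hFδ
    have hT1 : t₀ ≤ t₀ + (F t₀ + 1) / δ := by
      have h4 : 0 < (F t₀ + 1) / δ := div_pos (by linarith) hδ
      linarith
    have h1 := hH (Set.mem_Ici.2 le_rfl) (Set.mem_Ici.2 hT1) hT1
    have h2 : 0 < F (t₀ + (F t₀ + 1) / δ) := hLpos _
    have h3 : δ * ((F t₀ + 1) / δ) = F t₀ + 1 := mul_div_cancel₀ _ hδ.ne'
    nlinarith [h1, h2, h3]
  -- first conclusion
  have goal1 : Tendsto F atTop (nhds 0) := by
    rw [Metric.tendsto_atTop]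
    intro ε hε
    obtain ⟨T, hT, hFT⟩ := keyε ε hε
    refine ⟨T, fun t ht => ?_⟩
    have h1 : F t ≤ F T := hFanti (le_trans ht₀ hT) (le_trans (le_trans ht₀ hT) ht) ht
    have h2 : 0 < F t := hLpos _
    rw [Real.dist_eq, sub_zero, abs_of_pos h2]
    linarith
  refine ⟨goal1, ?_⟩
  -- second conclusion
  -- setup for homogeneity bound
  set i0 : Fin N := ⟨0, hN⟩ with hi0def
  set j0 : Fin p := ⟨0, hpe⟩ with hj0def
  have hu : ‖(EuclideanSpace.single j0 (1:ℝ) : EuclideanSpace ℝ (Fin p))‖ = 1 := by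
    rw [EuclideanSpace.norm_single]
    norm_num
  obtain ⟨z, hz, hmax⟩ := (isCompact_sphere (0 : EuclideanSpace ℝ (Fin p)) 1).exists_isMaxOn
    ⟨EuclideanSpace.single j0 (1:ℝ), mem_sphere_zero_iff_norm.2 hu⟩
    ((hqd i0).continuous.continuousOn)
  set M : ℝ := q i0 z with hMdef
  have hMz : ∀ y : EuclideanSpace ℝ (Fin p), ‖y‖ = 1 → q i0 y ≤ M :=
    fun y hy => isMaxOn_iff.1 hmax y (mem_sphere_zero_iff_norm.2 hy)
  have hMb : ∀ x : EuclideanSpace ℝ (Fin p), x ≠ 0 → q i0 x ≤ M * ‖x‖ ^ L := by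
    intro x hx
    have hnx : (0:ℝ) < ‖x‖ := norm_pos_iff.2 hx
    have hux : ‖(‖x‖⁻¹ • x : EuclideanSpace ℝ (Fin p))‖ = 1 := by
      rw [norm_smul, norm_inv, norm_norm, inv_mul_cancel₀ hnx.ne']
    have h1 : q i0 x = ‖x‖ ^ L * q i0 (‖x‖⁻¹ • x) := by
      rw [← hhom i0 ‖x‖ hnx (‖x‖⁻¹ • x), smul_smul, mul_inv_cancel₀ hnx.ne', one_smul]
    rw [h1]
    have h2 := hMz _ hux
    have h3 : (0:ℝ) ≤ ‖x‖ ^ L := Real.rpow_nonneg hnx.le L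
    nlinarith
  -- find a time when q i0 (v t) is large, to show M > 0
  have hq_big : ∀ C : ℝ, ∀ᶠ t in atTop, C < q i0 (v t) := by
    intro C
    have hev : ∀ᶠ t in atTop, F t < Real.exp (-C) := goal1 (Iio_mem_nhds (Real.exp_pos _))
    filter_upwards [hev] with t hft
    have h1 : Real.exp (-(q i0 (v t))) ≤ F t := hterm _ i0
    have h2 : Real.exp (-(q i0 (v t))) < Real.exp (-C) := lt_of_le_of_lt h1 hft
    have h3 := Real.exp_lt_exp.1 h2
    linarith
  have hM : 0 < M := by
    obtain ⟨t1, ht1⟩ := (hq_big 1).exists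
    have hv1 : v t1 ≠ 0 := by
      intro hv0
      rw [hv0, hq0 i0] at ht1
      linarith
    have h1 := hMb (v t1) hv1
    have h2 : (0:ℝ) < ‖v t1‖ ^ L := Real.rpow_pos_of_pos (norm_pos_iff.2 hv1) L
    nlinarith
  -- norm divergence
  rw [tendsto_atTop]
  intro C
  have hC1 : (0:ℝ) < max C 1 := lt_of_lt_of_le one_pos (le_max_right C 1)
  filter_upwards [hq_big (M * (max C 1) ^ L)] with t hqt
  have hrp : (0:ℝ) < M * (max C 1) ^ L := mul_pos hM (Real.rpow_pos_of_pos hC1 L)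
  have hvt : v t ≠ 0 := by
    intro hv0
    rw [hv0, hq0 i0] at hqt
    linarith
  have h1 := hMb (v t) hvt
  have h2 : M * (max C 1) ^ L < M * ‖v t‖ ^ L := by linarith
  have h3 : (max C 1) ^ L < ‖v t‖ ^ L := lt_of_mul_lt_mul_left h2 hM.le
  have h4 : max C 1 ≤ ‖v t‖ := by
    by_contra hcon
    push_neg at hcon
    have := Real.rpow_le_rpow (norm_nonneg _) hcon.le hL.le
    linarith
  exact le_trans (le_max_left C 1) h4
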